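/- Assume I = ℝ or 0 ∈ I ⊆ [0,∞). A function f : Iⁿ → ℝ is comonotonically additive if and only if it is horizontally min-additive. -/

import Mathlib

/-- `f` is horizontally min-additive on `Iⁿ`. -/
def HorizMinAdd {n : ℕ} (I : Set ℝ) (f : (Fin n → ℝ) → ℝ) : Prop :=
  ∀ x : Fin n → ℝ, (∀ i, x i ∈ I) → ∀ c ∈ I, (∀ i, x i - min (x i) c ∈ I) →
    f x = f (fun i => min (x i) c) + f (fun i => x i - min (x i) c)

/-- `x` and `y` are comonotonic `n`-tuples. -/
def Comonotone {n : ℕ} (x y : Fin n → ℝ) : Prop :=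
  ∃ σ : Equiv.Perm (Fin n), Monotone (x ∘ σ) ∧ Monotone (y ∘ σ)

/-- `f` is comonotonically additive on `Iⁿ`. -/
def ComonAdd {n : ℕ} (I : Set ℝ) (f : (Fin n → ℝ) → ℝ) : Prop :=
  ∀ x y : Fin n → ℝ, (∀ i, x i ∈ I) → (∀ i, y i ∈ I) → (∀ i, x i + y i ∈ I) →
    Comonotone x y → f (x + y) = f x + f y

section Aux

variable {n : ℕ} {I : Set ℝ} {f : (Fin n → ℝ) → ℝ}

private lemma sub_min_eq' (u c : ℝ) : u - min u c = max (u - c) 0 := by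
  rcases le_total u c with h | h
  · rw [min_eq_left h, sub_self, max_eq_right (by linarith)]
  · rw [min_eq_right h, max_eq_left (by linarith)]

private lemma CA.diff_mem (hI : I.OrdConnected) (h0 : (0:ℝ) ∈ I)
    (hcase : I = Set.univ ∨ I ⊆ Set.Ici 0)
    {u v : ℝ} (hu : u ∈ I) (hv : v ∈ I) (huv : u ≤ v) : v - u ∈ I := by
  rcases hcase with h | h
  · simp [h]
  · exact hI.out h0 hv ⟨sub_nonneg.2 huv, sub_le_self _ (h hu)⟩

private lemma CA.rem_mem (hI : I.OrdConnected) (h0 : (0:ℝ) ∈ I)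
    (hcase : I = Set.univ ∨ I ⊆ Set.Ici 0)
    {u v : ℝ} (hu : u ∈ I) (hv : v ∈ I) : u - min u v ∈ I := by
  rcases hcase with h | h
  · simp [h]
  · refine hI.out h0 hu ⟨sub_nonneg.2 (min_le_left _ _), sub_le_self _ ?_⟩
    exact le_min (h hu) (h hv)

private lemma CA.f0 (h0 : (0:ℝ) ∈ I) (hf : HorizMinAdd I f) :
    f (0 : Fin n → ℝ) = 0 := by
  have H := hf 0 (fun i => by simpa using h0) 0 h0 (fun i => by simpa using h0)
  have e1 : (fun i => min ((0 : Fin n → ℝ) i) 0) = (0 : Fin n → ℝ) := by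
    funext i; simp
  have e2 : (fun i => (0 : Fin n → ℝ) i - min ((0 : Fin n → ℝ) i) 0) = (0 : Fin n → ℝ) := by
    funext i; simp
  rw [e1, e2] at H
  linarith

private lemma CA.constAdd_half (hf : HorizMinAdd I f)
    {a b : ℝ} (ha : a ∈ I) (hb : b ∈ I) (hab : a + b ∈ I) (hb0 : 0 ≤ b) :
    f (fun _ : Fin n => a + b) = f (fun _ => a) + f (fun _ => b) := by
  have hle : a ≤ a + b := by linarith
  have H := hf (fun _ => a + b) (fun _ => hab) a ha
    (fun i => by rw [min_eq_right hle]; simpa using hb)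
  have e1 : (fun _ : Fin n => min (a + b) a) = (fun _ => a) := by
    funext i; rw [min_eq_right hle]
  have e2 : (fun _ : Fin n => (a + b) - min (a + b) a) = (fun _ => b) := by
    funext i; rw [min_eq_right hle]; ring
  rw [e1, e2] at H
  exact H

private lemma CA.constAdd (h0 : (0:ℝ) ∈ I)
    (hcase : I = Set.univ ∨ I ⊆ Set.Ici 0) (hf : HorizMinAdd I f)
    {a b : ℝ} (ha : a ∈ I) (hb : b ∈ I) (hab : a + b ∈ I) :
    f (fun _ : Fin n => a + b) = f (fun _ => a) + f (fun _ => b) := by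
  by_cases hb0 : 0 ≤ b
  · exact CA.constAdd_half hf ha hb hab hb0
  by_cases ha0 : 0 ≤ a
  · have H := CA.constAdd_half (n := n) hf hb ha (by rwa [add_comm]) ha0
    rw [show a + b = b + a from add_comm a b, H]; ring
  -- both negative; then I = univ
  have hIu : I = Set.univ := by
    rcases hcase with h | h
    · exact h
    · exact absurd (h hb) (by simpa using hb0)
  have hmem : ∀ t : ℝ, t ∈ I := by simp [hIu]
  push_neg at hb0 ha0
  -- f (a) = f (a+b) + f(-b)
  have hle : a + b ≤ a := by linarith
  have H1 := hf (fun _ : Fin n => a) (fun _ => hmem a) (a + b) (hmem _)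
    (fun i => by rw [min_eq_right hle]; exact hmem _)
  have e1 : (fun _ : Fin n => min a (a + b)) = (fun _ => a + b) := by
    funext i; rw [min_eq_right hle]
  have e2 : (fun _ : Fin n => a - min a (a + b)) = (fun _ => -b) := by
    funext i; rw [min_eq_right hle]; ring
  rw [e1, e2] at H1
  -- f (b + -b) = f b + f (-b)
  have H2 := CA.constAdd_half (n := n) hf (hmem b) (hmem (-b)) (hmem _) (by linarith)
  have e3 : (fun _ : Fin n => b + -b) = (0 : Fin n → ℝ) := by funext i; simp
  rw [e3, CA.f0 h0 hf] at H2
  linarith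

private lemma CA.ind_add (h0 : (0:ℝ) ∈ I) (hf : HorizMinAdd I f)
    (A : Fin n → Prop) [DecidablePred A] {s t : ℝ}
    (hs : s ∈ I) (ht : t ∈ I) (hst : s + t ∈ I) (hs0 : 0 ≤ s) (ht0 : 0 ≤ t) :
    f (fun i => if A i then s + t else 0) =
      f (fun i => if A i then s else 0) + f (fun i => if A i then t else 0) := by
  have H := hf (fun i => if A i then s + t else 0)
    (fun i => by split <;> assumption) s hs
    (fun i => by
      by_cases h : A i
      · simp only [h, if_true]
        rw [min_eq_right (by linarith : s ≤ s + t)]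
        simpa using ht
      · simp only [h, if_false]
        rw [min_eq_left hs0]
        simpa using h0)
  have e1 : (fun i => min (if A i then s + t else 0) s) = (fun i => if A i then s else 0) := by
    funext i
    by_cases h : A i
    · simp only [h, if_true]; rw [min_eq_right (by linarith : s ≤ s + t)]
    · simp only [h, if_false]; rw [min_eq_left hs0]
  have e2 : (fun i => (if A i then s + t else 0) - min (if A i then s + t else 0) s) =
      (fun i => if A i then t else 0) := by
    funext i
    by_cases h : A i
    · simp only [h, if_true]; rw [min_eq_right (by linarith : s ≤ s + t)]; ring
    · simp only [h, if_false]; rw [min_eq_left hs0]; ring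
  rw [e1, e2] at H
  exact H

private lemma CA.step_split (h0 : (0:ℝ) ∈ I) (hf : HorizMinAdd I f)
    (A : Fin n → Prop) [DecidablePred A] {a a' : ℝ}
    (ha : a ∈ I) (ha' : a' ∈ I) (hd : a' - a ∈ I) (haa : a ≤ a') :
    f (fun i => if A i then a' else a) =
      f (fun _ => a) + f (fun i => if A i then a' - a else 0) := by
  have H := hf (fun i => if A i then a' else a)
    (fun i => by split <;> assumption) a ha
    (fun i => by
      by_cases h : A i
      · simp only [h, if_true]; rw [min_eq_right haa]; exact hd
      · simp only [h, if_false]; rw [min_self]; simpa using h0)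
  have e1 : (fun i => min (if A i then a' else a) a) = (fun _ : Fin n => a) := by
    funext i
    by_cases h : A i
    · simp only [h, if_true]; rw [min_eq_right haa]
    · simp only [h, if_false]; rw [min_self]
  have e2 : (fun i => (if A i then a' else a) - min (if A i then a' else a) a) =
      (fun i => if A i then a' - a else 0) := by
    funext i
    by_cases h : A i
    · simp only [h, if_true]; rw [min_eq_right haa]
    · simp only [h, if_false]; rw [min_self]; ring
  rw [e1, e2] at H
  exact H

private lemma CA.two_add (hI : I.OrdConnected) (h0 : (0:ℝ) ∈ I)
    (hcase : I = Set.univ ∨ I ⊆ Set.Ici 0) (hf : HorizMinAdd I f)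
    (A : Fin n → Prop) [DecidablePred A] {a a' b b' : ℝ}
    (ha : a ∈ I) (ha' : a' ∈ I) (hb : b ∈ I) (hb' : b' ∈ I)
    (hab : a + b ∈ I) (hab' : a' + b' ∈ I)
    (haa : a ≤ a') (hbb : b ≤ b') :
    f (fun i => if A i then a' + b' else a + b) =
      f (fun i => if A i then a' else a) + f (fun i => if A i then b' else b) := by
  have hda : a' - a ∈ I := CA.diff_mem hI h0 hcase ha ha' haa
  have hdb : b' - b ∈ I := CA.diff_mem hI h0 hcase hb hb' hbb
  have hds : (a' + b') - (a + b) ∈ I :=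
    CA.diff_mem hI h0 hcase hab hab' (by linarith)
  have H1 := CA.step_split h0 hf A hab hab' hds (by linarith : a + b ≤ a' + b')
  have H2 := CA.step_split h0 hf A ha ha' hda haa
  have H3 := CA.step_split h0 hf A hb hb' hdb hbb
  have H4 := CA.ind_add h0 hf A hda hdb
    (by rw [show (a' - a) + (b' - b) = (a' + b') - (a + b) by ring]; exact hds)
    (by linarith) (by linarith)
  have H5 := CA.constAdd (n := n) h0 hcase hf ha hb hab
  have e : (fun i => if A i then (a' + b') - (a + b) else 0) =
      (fun i => if A i then (a' - a) + (b' - b) else 0) := by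
    funext i; split
    · ring
    · rfl
  rw [e] at H1
  rw [H1, H2, H3, H4, H5]
  ring

/-- The key lemma: horizontal min-additivity gives additivity on
sorted (monotone) comonotone pairs, by induction on the number of
distinct pairs of values. -/
private lemma CA.main (hI : I.OrdConnected) (h0 : (0:ℝ) ∈ I)
    (hcase : I = Set.univ ∨ I ⊆ Set.Ici 0) (hf : HorizMinAdd I f) :
    ∀ k : ℕ, ∀ x y : Fin n → ℝ, Monotone x → Monotone y →
      (∀ i, x i ∈ I) → (∀ i, y i ∈ I) → (∀ i, x i + y i ∈ I) →
      (Finset.image (fun i => (x i, y i)) Finset.univ).card ≤ k →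
      f (fun i => x i + y i) = f x + f y := by
  intro k
  induction k with
  | zero =>
    intro x y _ _ _ _ _ hcard
    have hempty : IsEmpty (Fin n) := by
      by_contra h
      rw [not_isEmpty_iff] at h
      have hne : (Finset.image (fun i => (x i, y i)) Finset.univ).Nonempty :=
        ⟨_, Finset.mem_image_of_mem _ (Finset.mem_univ h.some)⟩
      have := Finset.card_pos.2 hne
      omega
    have hz : ∀ g : Fin n → ℝ, g = 0 := fun g => funext fun i => (hempty.false i).elim
    rw [hz (fun i => x i + y i), hz x, hz y, CA.f0 h0 hf]
    ring
  | succ k IH =>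
    intro x y hmx hmy hx hy hxy hcard
    by_cases hk : (Finset.image (fun i => (x i, y i)) Finset.univ).card ≤ k
    · exact IH x y hmx hmy hx hy hxy hk
    have hne : Nonempty (Fin n) := by
      by_contra h
      rw [not_nonempty_iff] at h
      have : (Finset.univ : Finset (Fin n)) = ∅ := Finset.univ_eq_empty
      rw [this] at hk
      simp at hk
    have hnpos : 0 < n := Fin.pos_iff_nonempty.2 hne
    set i0 : Fin n := ⟨0, hnpos⟩ with hi0def
    have hi0 : ∀ i, i0 ≤ i := fun i => by rw [Fin.le_def]; exact Nat.zero_le _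
    by_cases hall : ∀ i, (x i, y i) = (x i0, y i0)
    · have hxc : x = fun _ => x i0 :=
        funext fun i => (congrArg Prod.fst (hall i) : x i = x i0)
      have hyc : y = fun _ => y i0 :=
        funext fun i => (congrArg Prod.snd (hall i) : y i = y i0)
      have hzc : (fun i => x i + y i) = (fun _ : Fin n => x i0 + y i0) :=
        funext fun i => by
          have h := hall i
          rw [Prod.mk.injEq] at h
          rw [h.1, h.2]
      rw [hzc]
      nth_rewrite 2 [hxc]
      nth_rewrite 2 [hyc]
      exact CA.constAdd h0 hcase hf (hx i0) (hy i0) (hxy i0)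
    · push_neg at hall
      classical
      obtain ⟨i1, hi1⟩ := hall
      have hSne : (Finset.univ.filter
          (fun i => (x i, y i) ≠ (x i0, y i0))).Nonempty :=
        ⟨i1, Finset.mem_filter.2 ⟨Finset.mem_univ _, hi1⟩⟩
      obtain ⟨j, hjS, hlt⟩ :
          ∃ j, (x j, y j) ≠ (x i0, y i0) ∧
            ∀ i, ¬ j ≤ i → (x i, y i) = (x i0, y i0) := by
        refine ⟨(Finset.univ.filter
            (fun i => (x i, y i) ≠ (x i0, y i0))).min' hSne, ?_, ?_⟩
        · exact (Finset.mem_filter.1 (Finset.min'_mem _ hSne)).2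
        · intro i hij
          by_contra h
          exact hij (Finset.min'_le _ i (Finset.mem_filter.2 ⟨Finset.mem_univ _, h⟩))
      have hmz : Monotone (fun i => x i + y i) := fun i1 i2 h =>
        add_le_add (hmx h) (hmy h)
      -- decomposition of x
      have ex' : (fun i => min (x i) (x j)) = (fun i => if j ≤ i then x j else x i0) := by
        funext i
        by_cases h : j ≤ i
        · simp only [h, if_true]; rw [min_eq_right (hmx h)]
        · have hxi : x i = x i0 := (congrArg Prod.fst (hlt i h) : x i = x i0)
          simp only [h, if_false]
          rw [min_eq_left (hmx (le_of_not_ge h)), hxi]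
      have ex'' : (fun i => x i - min (x i) (x j)) = (fun i => max (x i - x j) 0) :=
        funext fun i => sub_min_eq' _ _
      have ey' : (fun i => min (y i) (y j)) = (fun i => if j ≤ i then y j else y i0) := by
        funext i
        by_cases h : j ≤ i
        · simp only [h, if_true]; rw [min_eq_right (hmy h)]
        · have hyi : y i = y i0 := (congrArg Prod.snd (hlt i h) : y i = y i0)
          simp only [h, if_false]
          rw [min_eq_left (hmy (le_of_not_ge h)), hyi]
      have ey'' : (fun i => y i - min (y i) (y j)) = (fun i => max (y i - y j) 0) :=
        funext fun i => sub_min_eq' _ _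
      have ez' : (fun i => min (x i + y i) (x j + y j)) =
          (fun i => if j ≤ i then x j + y j else x i0 + y i0) := by
        funext i
        by_cases h : j ≤ i
        · simp only [h, if_true]
          rw [min_eq_right (add_le_add (hmx h) (hmy h))]
        · have hxi : x i = x i0 := (congrArg Prod.fst (hlt i h) : x i = x i0)
          have hyi : y i = y i0 := (congrArg Prod.snd (hlt i h) : y i = y i0)
          simp only [h, if_false]
          rw [min_eq_left (add_le_add (hmx (le_of_not_ge h)) (hmy (le_of_not_ge h))),
            hxi, hyi]
      have ez'' : (fun i => (x i + y i) - min (x i + y i) (x j + y j)) =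
          (fun i => max ((x i + y i) - (x j + y j)) 0) :=
        funext fun i => sub_min_eq' _ _
      have Ex : f x = f (fun i => if j ≤ i then x j else x i0) +
          f (fun i => max (x i - x j) 0) := by
        have H := hf x hx (x j) (hx j)
          (fun i => CA.rem_mem hI h0 hcase (hx i) (hx j))
        rwa [ex', ex''] at H
      have Ey : f y = f (fun i => if j ≤ i then y j else y i0) +
          f (fun i => max (y i - y j) 0) := by
        have H := hf y hy (y j) (hy j)
          (fun i => CA.rem_mem hI h0 hcase (hy i) (hy j))
        rwa [ey', ey''] at H
      have Ez : f (fun i => x i + y i) =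
          f (fun i => if j ≤ i then x j + y j else x i0 + y i0) +
          f (fun i => max ((x i + y i) - (x j + y j)) 0) := by
        have H := hf (fun i => x i + y i) hxy (x j + y j) (hxy j)
          (fun i => CA.rem_mem hI h0 hcase (hxy i) (hxy j))
        rwa [ez', ez''] at H
      have Etrunc : f (fun i => if j ≤ i then x j + y j else x i0 + y i0) =
          f (fun i => if j ≤ i then x j else x i0) +
          f (fun i => if j ≤ i then y j else y i0) :=
        CA.two_add hI h0 hcase hf (fun i => j ≤ i)
          (hx i0) (hx j) (hy i0) (hy j) (hxy i0) (hxy j)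
          (hmx (hi0 j)) (hmy (hi0 j))
      -- the remainders: pointwise sum identity
      have emax : ∀ i, max ((x i + y i) - (x j + y j)) 0 =
          max (x i - x j) 0 + max (y i - y j) 0 := by
        intro i
        rcases le_total i j with h | h
        · rw [max_eq_right (by linarith [hmx h, hmy h]),
            max_eq_right (by linarith [hmx h]), max_eq_right (by linarith [hmy h])]
          ring
        · rw [max_eq_left (by linarith [hmx h, hmy h]),
            max_eq_left (by linarith [hmx h]), max_eq_left (by linarith [hmy h])]
          ring
      have memX : ∀ i, max (x i - x j) 0 ∈ I := fun i => by
        rw [← sub_min_eq']; exact CA.rem_mem hI h0 hcase (hx i) (hx j)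
      have memY : ∀ i, max (y i - y j) 0 ∈ I := fun i => by
        rw [← sub_min_eq']; exact CA.rem_mem hI h0 hcase (hy i) (hy j)
      have memS : ∀ i, max (x i - x j) 0 + max (y i - y j) 0 ∈ I := fun i => by
        rw [← emax i, ← sub_min_eq']
        exact CA.rem_mem hI h0 hcase (hxy i) (hxy j)
      have monX : Monotone (fun i => max (x i - x j) 0) := fun i1 i2 h =>
        max_le_max (by linarith [hmx h]) le_rfl
      have monY : Monotone (fun i => max (y i - y j) 0) := fun i1 i2 h =>
        max_le_max (by linarith [hmy h]) le_rfl
      -- cardinality decrease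
      have hcard' : (Finset.image
          (fun i => (max (x i - x j) 0, max (y i - y j) 0)) Finset.univ).card ≤ k := by
        set g : ℝ × ℝ → ℝ × ℝ := fun p => (max (p.1 - x j) 0, max (p.2 - y j) 0) with hgdef
        set old := Finset.image (fun i => (x i, y i)) Finset.univ with holddef
        have himg : Finset.image
            (fun i => (max (x i - x j) 0, max (y i - y j) 0)) Finset.univ =
            Finset.image g old := by
          rw [holddef, Finset.image_image]; rfl
        have hmem0 : (x i0, y i0) ∈ old := by
          rw [holddef]; exact Finset.mem_image_of_mem _ (Finset.mem_univ i0)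
        have hsub : Finset.image g old ⊆ Finset.image g (old.erase (x i0, y i0)) := by
          intro p hp
          obtain ⟨q, hq, rfl⟩ := Finset.mem_image.1 hp
          by_cases hq0 : q = (x i0, y i0)
          · subst hq0
            have hgj : g (x i0, y i0) = g (x j, y j) := by
              rw [hgdef]
              simp only
              rw [max_eq_right (by linarith [hmx (hi0 j)]),
                max_eq_right (by linarith [hmy (hi0 j)]),
                max_eq_right (by linarith : x j - x j ≤ 0),
                max_eq_right (by linarith : y j - y j ≤ 0)]
            rw [hgj]
            refine Finset.mem_image_of_mem g (Finset.mem_erase.2 ⟨hjS, ?_⟩)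
            rw [holddef]; exact Finset.mem_image_of_mem _ (Finset.mem_univ j)
          · exact Finset.mem_image_of_mem g (Finset.mem_erase.2 ⟨hq0, hq⟩)
        calc (Finset.image
            (fun i => (max (x i - x j) 0, max (y i - y j) 0)) Finset.univ).card
            = (Finset.image g old).card := by rw [himg]
          _ ≤ (Finset.image g (old.erase (x i0, y i0))).card := Finset.card_le_card hsub
          _ ≤ (old.erase (x i0, y i0)).card := Finset.card_image_le
          _ = old.card - 1 := Finset.card_erase_of_mem hmem0
          _ ≤ k := by omega
      have Erem := IH (fun i => max (x i - x j) 0) (fun i => max (y i - y j) 0)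
        monX monY memX memY memS hcard'
      have erw : (fun i => max ((x i + y i) - (x j + y j)) 0) =
          (fun i => max (x i - x j) 0 + max (y i - y j) 0) := funext emax
      rw [erw] at Ez
      rw [Ez, Etrunc, Erem, Ex, Ey]
      ring

end Aux

/-- when `I = ℝ` or `0 ∈ I ⊆ [0,∞)`, comonotonic additivity is
equivalent to horizontal min-additivity. -/
theorem comonAdd_iff_horizMinAdd {n : ℕ} (I : Set ℝ) (hI : I.OrdConnected)
    (h0 : (0 : ℝ) ∈ I) (hnt : ∃ x ∈ I, x ≠ 0)
    (hcase : I = Set.univ ∨ I ⊆ Set.Ici 0)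
    (f : (Fin n → ℝ) → ℝ) :
    ComonAdd I f ↔ HorizMinAdd I f := by
  constructor
  · -- comonotone additive → horizontally min-additive
    intro hca x hx c hc hrem
    set σ := Tuple.sort x with hσdef
    have hsort : Monotone (x ∘ σ) := Tuple.monotone_sort x
    have hmin_mem : ∀ i, min (x i) c ∈ I := by
      intro i
      rcases le_total (x i) c with h | h
      · rw [min_eq_left h]; exact hx i
      · rw [min_eq_right h]; exact hc
    have hsum : ∀ i, min (x i) c + (x i - min (x i) c) ∈ I := by
      intro i
      rw [show min (x i) c + (x i - min (x i) c) = x i by ring]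
      exact hx i
    have hcom : Comonotone (fun i => min (x i) c) (fun i => x i - min (x i) c) := by
      refine ⟨σ, ?_, ?_⟩
      · intro i1 i2 h
        have hh : x (σ i1) ≤ x (σ i2) := hsort h
        exact min_le_min hh le_rfl
      · intro i1 i2 h
        have hh : x (σ i1) ≤ x (σ i2) := hsort h
        show x (σ i1) - min (x (σ i1)) c ≤ x (σ i2) - min (x (σ i2)) c
        rw [sub_min_eq', sub_min_eq']
        exact max_le_max (by linarith) le_rfl
    have key := hca (fun i => min (x i) c) (fun i => x i - min (x i) c)
      hmin_mem hrem hsum hcom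
    have esum : (fun i => min (x i) c) + (fun i => x i - min (x i) c) = x := by
      funext i
      show min (x i) c + (x i - min (x i) c) = x i
      ring
    rwa [esum] at key
  · -- horizontally min-additive → comonotone additive
    intro hf x y hx hy hxy hcom
    obtain ⟨σ, hmx, hmy⟩ := hcom
    set g : (Fin n → ℝ) → ℝ := fun z => f (fun i => z (σ.symm i)) with hgdef
    have hgf : HorizMinAdd I g := by
      intro z hz c hc hrem
      exact hf (fun i => z (σ.symm i)) (fun i => hz _) c hc (fun i => hrem _)
    have H := CA.main hI h0 hcase hgf
      ((Finset.image (fun i => ((x ∘ σ) i, (y ∘ σ) i)) Finset.univ).card)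
      (x ∘ σ) (y ∘ σ) hmx hmy (fun i => hx _) (fun i => hy _) (fun i => hxy _) le_rfl
    have e1 : g (x ∘ σ) = f x := by
      show f (fun i => x (σ (σ.symm i))) = f x
      congr 1
      funext i
      rw [Equiv.apply_symm_apply]
    have e2 : g (y ∘ σ) = f y := by
      show f (fun i => y (σ (σ.symm i))) = f y
      congr 1
      funext i
      rw [Equiv.apply_symm_apply]
    have e3 : g (fun i => (x ∘ σ) i + (y ∘ σ) i) = f (x + y) := by
      show f (fun i => x (σ (σ.symm i)) + y (σ (σ.symm i))) = f (x + y)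
      congr 1
      funext i
      rw [Equiv.apply_symm_apply]
      rfl
    rw [e1, e2, e3] at H
    exact H
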